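/- Let f*(t) = 1/2 + (1/2)·∏_{k=1}^{∞} cos(t/k!) and t_n = π·(2n)!. Then f*(t_n) ≠ 0 for all n, f*(t_n ± π) = 0, and the ratio f*(t_n - π)·f*(t_n + π)/f*(t_n)² = 1/(1 + f_s(t_n))² tends to +∞ as n → ∞, where f_s(t) = ∏_{k=1}^{∞} cos(t/k!). -/

import Mathlib

open Nat Filter

open Topology

noncomputable def fs (t : ℝ) : ℝ := ∏' k : ℕ, Real.cos (t / ((k + 1)! : ℝ))

noncomputable def fstar (t : ℝ) : ℝ := 1 / 2 + (1 / 2) * fs t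

noncomputable def tn (n : ℕ) : ℝ := Real.pi * ((2 * n)! : ℝ)

/-- If one factor vanishes, the whole `tprod` vanishes (over `ℝ`). -/
lemma tprod_eq_zero_of_factor {f : ℕ → ℝ} (i : ℕ) (h : f i = 0) : ∏' k, f k = 0 := by
  have hp : HasProd f 0 := by
    have hev : (fun s : Finset ℕ => ∏ j ∈ s, f j) =ᶠ[atTop] (fun _ => (0 : ℝ)) := by
      filter_upwards [Filter.eventually_ge_atTop ({i} : Finset ℕ)] with s hs
      exact Finset.prod_eq_zero (by simpa using hs) h
    exact Filter.Tendsto.congr' hev.symm tendsto_const_nhds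
  exact hp.tprod_eq

lemma fs_sub_pi (n : ℕ) (hn : 0 < n) : fs (tn n - Real.pi) = 0 := by
  obtain ⟨m, hm⟩ : 2 ∣ (2 * n)! := Nat.dvd_factorial two_pos (by omega)
  apply tprod_eq_zero_of_factor 1
  have h2 : (((1 : ℕ) + 1)! : ℝ) = 2 := by norm_num [Nat.factorial]
  have harg : (tn n - Real.pi) / (((1 : ℕ) + 1)! : ℝ) = (m : ℝ) * Real.pi - Real.pi / 2 := by
    rw [h2, tn, hm]
    push_cast
    ring
  rw [harg, Real.cos_sub_pi_div_two, Real.sin_nat_mul_pi]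

lemma fs_add_pi (n : ℕ) (hn : 0 < n) : fs (tn n + Real.pi) = 0 := by
  obtain ⟨m, hm⟩ : 2 ∣ (2 * n)! := Nat.dvd_factorial two_pos (by omega)
  apply tprod_eq_zero_of_factor 1
  have h2 : (((1 : ℕ) + 1)! : ℝ) = 2 := by norm_num [Nat.factorial]
  have harg : (tn n + Real.pi) / (((1 : ℕ) + 1)! : ℝ) = (m : ℝ) * Real.pi + Real.pi / 2 := by
    rw [h2, tn, hm]
    push_cast
    ring
  rw [harg, Real.cos_add_pi_div_two, Real.sin_nat_mul_pi, neg_zero]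

set_option maxHeartbeats 1000000 in
lemma key_bounds (n : ℕ) (hn : 0 < n) :
    0 < 1 + fs (tn n) ∧
      1 + fs (tn n) ≤ 81 * Real.pi ^ 2 / (64 * ((2 * n + 1 : ℕ) : ℝ) ^ 2) := by
  have hπ := Real.pi_pos
  set N := 2 * n with hN
  have hN2 : 2 ≤ N := by omega
  set u : ℝ := ((N + 1 : ℕ) : ℝ) with hu
  have hu3 : (3 : ℝ) ≤ u := by
    rw [hu]; exact_mod_cast show 3 ≤ N + 1 by omega
  have hu0 : (0 : ℝ) < u := by linarith
  have hfact_pos : ∀ m : ℕ, (0 : ℝ) < (m ! : ℝ) := fun m => by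
    exact_mod_cast m.factorial_pos
  set θ : ℕ → ℝ := fun i => tn n / ((i + N + 1)! : ℝ) with hθdef
  have htn_pos : 0 < tn n := by
    rw [tn]; exact mul_pos hπ (hfact_pos _)
  have hθpos : ∀ i, 0 < θ i := fun i => div_pos htn_pos (hfact_pos _)
  -- upper bound on θ
  have hθle : ∀ i, θ i ≤ Real.pi / u * (1 / 3 : ℝ) ^ i := by
    intro i
    have hnat : N ! * ((N + 1) * 3 ^ i) ≤ (i + N + 1)! := by
      have h1 : N ! * (N + 1) ^ (i + 1) ≤ (N + (i + 1))! :=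
        Nat.factorial_mul_pow_le_factorial
      have h2 : (N + 1) * 3 ^ i ≤ (N + 1) ^ (i + 1) := by
        rw [pow_succ']
        exact Nat.mul_le_mul_left _ (Nat.pow_le_pow_left (by omega) i)
      calc N ! * ((N + 1) * 3 ^ i) ≤ N ! * (N + 1) ^ (i + 1) :=
            Nat.mul_le_mul_left _ h2
        _ ≤ (N + (i + 1))! := h1
        _ = (i + N + 1)! := by rw [show N + (i + 1) = i + N + 1 by omega]
    have key : (N ! : ℝ) * (u * 3 ^ i) ≤ ((i + N + 1)! : ℝ) := by
      rw [hu]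
      exact_mod_cast hnat
    have h13 : (0 : ℝ) < (1 / 3 : ℝ) ^ i := by positivity
    rw [hθdef]
    show tn n / ((i + N + 1)! : ℝ) ≤ Real.pi / u * (1 / 3 : ℝ) ^ i
    rw [tn, ← hN, div_le_iff₀ (hfact_pos _)]
    have hEq : (Real.pi / u * (1 / 3 : ℝ) ^ i) * ((N ! : ℝ) * (u * 3 ^ i)) =
        Real.pi * (N ! : ℝ) * ((1 / 3 : ℝ) * 3) ^ i * (u⁻¹ * u) := by
      rw [mul_pow]; ring
    calc Real.pi * (N ! : ℝ)
        = Real.pi * (N ! : ℝ) * ((1 / 3 : ℝ) * 3) ^ i * (u⁻¹ * u) := by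
          rw [inv_mul_cancel₀ hu0.ne']; norm_num
      _ = (Real.pi / u * (1 / 3 : ℝ) ^ i) * ((N ! : ℝ) * (u * 3 ^ i)) := hEq.symm
      _ ≤ (Real.pi / u * (1 / 3 : ℝ) ^ i) * ((i + N + 1)! : ℝ) := by
          apply mul_le_mul_of_nonneg_left key
          positivity
  have hθle3 : ∀ i, θ i ≤ Real.pi / 3 := by
    intro i
    have h1 : Real.pi / u * (1 / 3 : ℝ) ^ i ≤ Real.pi / 3 * 1 := by
      apply mul_le_mul
      · exact div_le_div_of_nonneg_left hπ.le (by norm_num) hu3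
      · exact pow_le_one₀ (by norm_num) (by norm_num)
      · positivity
      · positivity
    calc θ i ≤ Real.pi / u * (1 / 3 : ℝ) ^ i := hθle i
      _ ≤ Real.pi / 3 * 1 := h1
      _ = Real.pi / 3 := by ring
  have hθlt : ∀ i, θ i < Real.pi / 2 := fun i => by
    have := hθle3 i; linarith
  have hcpos : ∀ i, 0 < Real.cos (θ i) := fun i =>
    Real.cos_pos_of_mem_Ioo ⟨by linarith [hθpos i], hθlt i⟩
  have hπsq : Real.pi ^ 2 ≤ 10 := by nlinarith [Real.pi_lt_d2, hπ]
  have hclb : ∀ i, (4 / 9 : ℝ) ≤ Real.cos (θ i) := by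
    intro i
    have h1 := Real.one_sub_sq_div_two_le_cos (x := θ i)
    have h2 := hθle3 i
    have h3 := hθpos i
    nlinarith
  -- the comparison sequence
  set b : ℕ → ℝ := fun i => 9 * Real.pi ^ 2 / (8 * u ^ 2) * (1 / 9 : ℝ) ^ i with hbdef
  have hlogle : ∀ i, -Real.log (Real.cos (θ i)) ≤ b i := by
    intro i
    have hc := hcpos i
    have hc1 := Real.cos_le_one (θ i)
    have hc49 := hclb i
    have hcc : Real.cos (θ i) * (Real.cos (θ i))⁻¹ = 1 := mul_inv_cancel₀ hc.ne'
    have h2 := Real.log_le_sub_one_of_pos (inv_pos.mpr hc)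
    rw [Real.log_inv] at h2
    have hA : -Real.log (Real.cos (θ i)) ≤ 9 / 4 * (1 - Real.cos (θ i)) := by
      nlinarith
    have h4 := Real.one_sub_sq_div_two_le_cos (x := θ i)
    have h9 : ((1 / 3 : ℝ) ^ i) ^ 2 = (1 / 9 : ℝ) ^ i := by
      rw [← pow_mul, mul_comm i 2, pow_mul]; norm_num
    have hθsq : θ i ^ 2 ≤ Real.pi ^ 2 / u ^ 2 * (1 / 9 : ℝ) ^ i := by
      have h5 : θ i ^ 2 ≤ (Real.pi / u * (1 / 3 : ℝ) ^ i) ^ 2 :=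
        pow_le_pow_left₀ (hθpos i).le (hθle i) 2
      calc θ i ^ 2 ≤ (Real.pi / u * (1 / 3 : ℝ) ^ i) ^ 2 := h5
        _ = Real.pi ^ 2 / u ^ 2 * (1 / 9 : ℝ) ^ i := by
            rw [mul_pow, div_pow, h9]
    calc -Real.log (Real.cos (θ i)) ≤ 9 / 4 * (1 - Real.cos (θ i)) := hA
      _ ≤ 9 / 4 * (θ i ^ 2 / 2) := by
          apply mul_le_mul_of_nonneg_left _ (by norm_num)
          linarith
      _ = 9 / 8 * θ i ^ 2 := by ring
      _ ≤ 9 / 8 * (Real.pi ^ 2 / u ^ 2 * (1 / 9 : ℝ) ^ i) := by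
          apply mul_le_mul_of_nonneg_left hθsq (by norm_num)
      _ = b i := by rw [hbdef]; ring
  have hbsum : Summable b := by
    rw [hbdef]
    exact (summable_geometric_of_lt_one (by norm_num) (by norm_num)).mul_left _
  have htsumb : ∑' i, b i = 81 * Real.pi ^ 2 / (64 * u ^ 2) := by
    rw [hbdef, tsum_mul_left, tsum_geometric_of_lt_one (by norm_num) (by norm_num)]
    rw [show ((1 : ℝ) - 1 / 9)⁻¹ = 9 / 8 by norm_num]
    ring
  have hlognn : ∀ i, 0 ≤ -Real.log (Real.cos (θ i)) := fun i =>
    neg_nonneg.mpr (Real.log_nonpos (hcpos i).le (Real.cos_le_one _))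
  have hsumneg : Summable (fun i => -Real.log (Real.cos (θ i))) :=
    Summable.of_nonneg_of_le hlognn hlogle hbsum
  have hsumlog : Summable (fun i => Real.log (Real.cos (θ i))) := by
    simpa using hsumneg.neg
  set S : ℝ := ∑' i, Real.log (Real.cos (θ i)) with hSdef
  have hnegS_eq : -S = ∑' i, -Real.log (Real.cos (θ i)) := by
    rw [hSdef, ← tsum_neg]
  have hnegS_le : -S ≤ 81 * Real.pi ^ 2 / (64 * u ^ 2) := by
    rw [hnegS_eq, ← htsumb]
    exact hsumneg.tsum_le_tsum hlogle hbsum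
  have hSneg : S < 0 := by
    have h0 : -Real.log (Real.cos (θ 0)) ≤ -S := by
      rw [hnegS_eq]
      exact hsumneg.le_tsum 0 (fun j _ => hlognn j)
    have hc0lt1 : Real.cos (θ 0) < 1 := by
      have := Real.cos_lt_cos_of_nonneg_of_le_pi (le_refl 0)
        (le_trans (hθle3 0) (by linarith)) (hθpos 0)
      rwa [Real.cos_zero] at this
    have := Real.log_neg (hcpos 0) hc0lt1
    linarith
  -- the infinite product of the tail
  have hP : HasProd (fun i => Real.cos (θ i)) (Real.exp S) := by
    have hfe : (fun i => Real.exp (Real.log (Real.cos (θ i)))) =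
        fun i => Real.cos (θ i) := by
      funext i; exact Real.exp_log (hcpos i)
    rw [← hfe]
    exact hsumlog.hasSum.rexp
  set f : ℕ → ℝ := fun k => Real.cos (tn n / ((k + 1)! : ℝ)) with hfdef
  have hP' : HasProd (fun i => f (i + N)) (Real.exp S) := hP
  have hmult_tail : Multipliable (fun i => f (i + N)) := ⟨_, hP'⟩
  have hsplit : (∏ i ∈ Finset.range N, f i) * ∏' i, f (i + N) = ∏' i, f i :=
    hmult_tail.prod_mul_tprod_nat_mul'
  -- the finite product equals -1
  obtain ⟨M, hM⟩ : ∃ M, N = M + 1 := ⟨N - 1, by omega⟩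
  have hfin : ∏ i ∈ Finset.range N, f i = -1 := by
    rw [hM, Finset.prod_range_succ]
    have h1 : ∏ i ∈ Finset.range M, f i = 1 := by
      apply Finset.prod_eq_one
      intro k hk
      have hkM : k < M := Finset.mem_range.mp hk
      have hdvd : (k + 1)! ∣ M ! := Nat.factorial_dvd_factorial (by omega)
      obtain ⟨q, hq⟩ := hdvd
      have hNf : (2 * n)! = 2 * n * ((k + 1)! * q) := by
        calc (2 * n)! = N ! := by rw [hN]
          _ = N * M ! := by rw [hM, Nat.factorial_succ]
          _ = 2 * n * ((k + 1)! * q) := by rw [hq, hN]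
      have hfk : ((k + 1)! : ℝ) ≠ 0 := (hfact_pos _).ne'
      have harg : tn n / ((k + 1)! : ℝ) = ((n * q : ℕ) : ℝ) * (2 * Real.pi) := by
        rw [tn, hNf]
        push_cast
        field_simp
      show Real.cos (tn n / ((k + 1)! : ℝ)) = 1
      rw [harg, Real.cos_nat_mul_two_pi]
    rw [h1, one_mul]
    show Real.cos (tn n / ((M + 1)! : ℝ)) = -1
    have harg : tn n / ((M + 1)! : ℝ) = Real.pi := by
      rw [tn, show 2 * n = M + 1 by omega]
      field_simp
    rw [harg, Real.cos_pi]
  -- conclude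
  have hfs : fs (tn n) = -Real.exp S := by
    have h1 : fs (tn n) = ∏' k, f k := rfl
    rw [h1, ← hsplit, hfin, hP'.tprod_eq]
    ring
  have hexplt1 : Real.exp S < 1 := by
    rw [show (1 : ℝ) = Real.exp 0 by rw [Real.exp_zero]]
    exact Real.exp_lt_exp.mpr hSneg
  have hexp_ge : 1 + S ≤ Real.exp S := by
    have := Real.add_one_le_exp S; linarith
  constructor
  · rw [hfs]; linarith
  · rw [hfs]
    have : 1 - Real.exp S ≤ -S := by linarith
    linarith

theorem stmt8 :
    (∀ n : ℕ, 0 < n → fstar (tn n) ≠ 0) ∧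
    (∀ n : ℕ, 0 < n → fs (tn n - Real.pi) = 0 ∧ fs (tn n + Real.pi) = 0) ∧
    (∀ n : ℕ, 0 < n →
      fstar (tn n - Real.pi) * fstar (tn n + Real.pi) / (fstar (tn n)) ^ 2 =
        1 / (1 + fs (tn n)) ^ 2) ∧
    Tendsto
      (fun n => fstar (tn n - Real.pi) * fstar (tn n + Real.pi) / (fstar (tn n)) ^ 2)
      atTop atTop := by
  have hratio : ∀ n : ℕ, 0 < n →
      fstar (tn n - Real.pi) * fstar (tn n + Real.pi) / (fstar (tn n)) ^ 2 =
        1 / (1 + fs (tn n)) ^ 2 := by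
    intro n hn
    have h1 := fs_sub_pi n hn
    have h2 := fs_add_pi n hn
    have hg := (key_bounds n hn).1
    have hne : 1 + fs (tn n) ≠ 0 := hg.ne'
    have hne2 : (1 / 2 + 1 / 2 * fs (tn n) : ℝ) ≠ 0 := by
      intro h; apply hne; linarith
    simp only [fstar, h1, h2]
    field_simp
    ring
  refine ⟨fun n hn => ?_, fun n hn => ⟨fs_sub_pi n hn, fs_add_pi n hn⟩, hratio, ?_⟩
  · have hg := (key_bounds n hn).1
    simp only [fstar]
    intro h
    apply hg.ne'
    linarith
  · -- the limit
    have hπ := Real.pi_pos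
    set E : ℕ → ℝ := fun n => 81 * Real.pi ^ 2 / (64 * ((2 * n + 1 : ℕ) : ℝ) ^ 2) with hEdef
    have hE0 : Tendsto E atTop (𝓝 0) := by
      apply squeeze_zero' (g := fun n : ℕ => 81 * Real.pi ^ 2 / 64 / (n : ℝ))
      · filter_upwards [eventually_ge_atTop 1] with n hn
        rw [hEdef]; positivity
      · filter_upwards [eventually_ge_atTop 1] with n hn
        rw [hEdef, div_div]
        apply div_le_div_of_nonneg_left (by positivity) (by positivity)
        have h1 : (n : ℝ) ≤ ((2 * n + 1 : ℕ) : ℝ) ^ 2 := by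
          have : (n : ℕ) ≤ (2 * n + 1) ^ 2 := by nlinarith
          exact_mod_cast this
        nlinarith
      · exact tendsto_const_div_atTop_nhds_zero_nat _
    have hg0 : Tendsto (fun n => 1 + fs (tn n)) atTop (𝓝[>] (0 : ℝ)) := by
      apply tendsto_nhdsWithin_of_tendsto_nhds_of_eventually_within
      · apply squeeze_zero' (g := E)
        · filter_upwards [eventually_ge_atTop 1] with n hn
          exact (key_bounds n hn).1.le
        · filter_upwards [eventually_ge_atTop 1] with n hn
          exact (key_bounds n hn).2
        · exact hE0
      · filter_upwards [eventually_ge_atTop 1] with n hn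
        exact (key_bounds n hn).1
    have hsq : Tendsto (fun x : ℝ => 1 / x ^ 2) (𝓝[>] (0 : ℝ)) atTop := by
      have h1 : Tendsto (fun x : ℝ => x ^ 2) (𝓝[>] (0 : ℝ)) (𝓝[>] (0 : ℝ)) := by
        apply tendsto_nhdsWithin_of_tendsto_nhds_of_eventually_within
        · have h2 := (continuous_pow 2).tendsto (0 : ℝ)
          simpa using h2.mono_left nhdsWithin_le_nhds
        · filter_upwards [self_mem_nhdsWithin] with x hx
          exact pow_pos (show (0:ℝ) < x from hx) 2
      simpa [one_div, Function.comp_def] using tendsto_inv_nhdsGT_zero.comp h1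
    have hcomp := hsq.comp hg0
    apply hcomp.congr'
    filter_upwards [eventually_ge_atTop 1] with n hn
    rw [Function.comp_apply, hratio n hn]
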